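/- For any functions f, f₁, f₂ : E → [0,∞], any λ > 0, and any linear map A : E' → E (E' a finite-dimensional real inner product space), the following identities hold: (λ·f)^Γ(y) = f^Γ(λy)/λ for all y ∈ E; (f∘A)^Γ = f^Γ∘A; (min{f₁,f₂})^Γ = max{f₁^Γ, f₂^Γ}. Furthermore, if f₁ and f₂ are upper radial, then (max{f₁,f₂})^Γ = min{f₁^Γ, f₂^Γ}. -/

import Mathlib

open Set
open scoped ENNReal RealInnerProductSpace

noncomputable section

variable {E : Type*} [NormedAddCommGroup E] [InnerProductSpace ℝ E] [FiniteDimensional ℝ E]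

/-- The perspective function `f^p(y,v) = v·f(y/v)` (for `v > 0`). -/
def persp (f : E → ℝ≥0∞) (y : E) (v : ℝ) : ℝ≥0∞ := ENNReal.ofReal v * f (v⁻¹ • y)

/-- The upper radial transformation `f^Γ(y) = sup{v > 0 : v·f(y/v) ≤ 1}` (`sup ∅ = 0`). -/
def radSup (f : E → ℝ≥0∞) (y : E) : ℝ≥0∞ :=
  ⨆ (v : ℝ) (_ : 0 < v) (_ : persp f y v ≤ 1), ENNReal.ofReal v

/-- `f` is upper radial: every `f^p(y,·)` is nondecreasing and upper semicontinuous on `ℝ₊₊`. -/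
def UpperRadial (f : E → ℝ≥0∞) : Prop :=
  ∀ y : E, MonotoneOn (persp f y) (Ioi (0 : ℝ)) ∧
    UpperSemicontinuousOn (persp f y) (Ioi (0 : ℝ))

lemma persp_const_smul (f : E → ℝ≥0∞) (lam : ℝ) (hlam : 0 < lam) (y : E) {v : ℝ}
    (hv : 0 < v) :
    persp (fun x => ENNReal.ofReal lam * f x) y v = persp f (lam • y) (lam * v) := by
  unfold persp
  rw [ENNReal.ofReal_mul hlam.le, smul_smul]
  have : (lam * v)⁻¹ * lam = v⁻¹ := by field_simp
  rw [this]
  ring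

lemma persp_min (f₁ f₂ : E → ℝ≥0∞) (y : E) (v : ℝ) :
    persp (fun x => min (f₁ x) (f₂ x)) y v = min (persp f₁ y v) (persp f₂ y v) := by
  unfold persp
  dsimp only
  rcases min_cases (f₁ (v⁻¹ • y)) (f₂ (v⁻¹ • y)) with ⟨h, h'⟩ | ⟨h, h'⟩ <;>
    rw [h] <;> symm
  · exact min_eq_left (mul_le_mul_right h' _)
  · exact min_eq_right (mul_le_mul_right h'.le _)

lemma persp_max (f₁ f₂ : E → ℝ≥0∞) (y : E) (v : ℝ) :
    persp (fun x => max (f₁ x) (f₂ x)) y v = max (persp f₁ y v) (persp f₂ y v) := by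
  unfold persp
  dsimp only
  rcases max_cases (f₁ (v⁻¹ • y)) (f₂ (v⁻¹ • y)) with ⟨h, h'⟩ | ⟨h, h'⟩ <;>
    rw [h] <;> symm
  · exact max_eq_left (mul_le_mul_right h' _)
  · exact max_eq_right (mul_le_mul_right h'.le _)

/-- Sup over the intersection of two downward-closed sets is the min of the sups. -/
lemma iSup_and_eq_min (S₁ S₂ : ℝ → Prop)
    (h₁ : ∀ v w : ℝ, 0 < w → w ≤ v → S₁ v → S₁ w)
    (h₂ : ∀ v w : ℝ, 0 < w → w ≤ v → S₂ v → S₂ w) :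
    (⨆ (v : ℝ) (_ : 0 < v) (_ : S₁ v ∧ S₂ v), ENNReal.ofReal v)
      = min (⨆ (v : ℝ) (_ : 0 < v) (_ : S₁ v), ENNReal.ofReal v)
          (⨆ (v : ℝ) (_ : 0 < v) (_ : S₂ v), ENNReal.ofReal v) := by
  apply le_antisymm
  · refine le_min ?_ ?_ <;>
    · refine iSup_le fun v => iSup_le fun hv => iSup_le fun hS => ?_
      first
        | exact le_iSup_of_le v (le_iSup_of_le hv (le_iSup_of_le hS.1 le_rfl))
        | exact le_iSup_of_le v (le_iSup_of_le hv (le_iSup_of_le hS.2 le_rfl))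
  · apply ENNReal.le_of_forall_nnreal_lt
    intro r hr
    rcases eq_or_lt_of_le (zero_le (a := r)) with hr0 | hr0
    · simp [← hr0]
    have hrR : (0 : ℝ) < (r : ℝ) := hr0
    obtain ⟨hr1, hr2⟩ := lt_min_iff.mp hr
    have key : ∀ (S : ℝ → Prop), (∀ v w : ℝ, 0 < w → w ≤ v → S v → S w) →
        (↑r : ℝ≥0∞) < (⨆ (v : ℝ) (_ : 0 < v) (_ : S v), ENNReal.ofReal v) → S r := by
      intro S hS hlt
      simp only [lt_iSup_iff] at hlt
      obtain ⟨v, hv, hSv, hrv⟩ := hlt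
      rw [← ENNReal.ofReal_coe_nnreal (p := r), ENNReal.ofReal_lt_ofReal_iff hv] at hrv
      exact hS v r hrR hrv.le hSv
    have hS1 := key S₁ h₁ hr1
    have hS2 := key S₂ h₂ hr2
    have hpair : S₁ (r : ℝ) ∧ S₂ (r : ℝ) := ⟨hS1, hS2⟩
    rw [← ENNReal.ofReal_coe_nnreal (p := r)]
    apply le_iSup_of_le (r : ℝ)
    apply le_iSup_of_le hrR
    exact le_iSup_of_le hpair le_rfl

/-- Calculus of the upper radial transformation: rescaling, linear composition, minimums,
and (for upper radial functions) maximums. -/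
theorem radial_transform_calculus
    {E' : Type*} [NormedAddCommGroup E'] [InnerProductSpace ℝ E'] [FiniteDimensional ℝ E']
    (f f₁ f₂ : E → ℝ≥0∞) (lam : ℝ) (hlam : 0 < lam) (A : E' →ₗ[ℝ] E) :
    (∀ y : E, radSup (fun x => ENNReal.ofReal lam * f x) y
        = radSup f (lam • y) / ENNReal.ofReal lam) ∧
    (radSup (fun x' => f (A x')) = fun y => radSup f (A y)) ∧
    (radSup (fun x => min (f₁ x) (f₂ x)) = fun y => max (radSup f₁ y) (radSup f₂ y)) ∧
    (UpperRadial f₁ → UpperRadial f₂ →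
      radSup (fun x => max (f₁ x) (f₂ x)) = fun y => min (radSup f₁ y) (radSup f₂ y)) := by
  have hlam0 : ENNReal.ofReal lam ≠ 0 := by
    simp [ENNReal.ofReal_eq_zero, not_le, hlam]
  have hlamT : ENNReal.ofReal lam ≠ ⊤ := ENNReal.ofReal_ne_top
  refine ⟨?_, ?_, ?_, ?_⟩
  · -- rescaling
    intro y
    unfold radSup
    apply le_antisymm
    · refine iSup_le fun v => iSup_le fun hv => iSup_le fun hle => ?_
      rw [persp_const_smul f lam hlam y hv] at hle
      have h1 : ENNReal.ofReal (lam * v)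
          ≤ ⨆ (w : ℝ) (_ : 0 < w) (_ : persp f (lam • y) w ≤ 1), ENNReal.ofReal w :=
        le_iSup_of_le (lam * v) (le_iSup_of_le (mul_pos hlam hv) (le_iSup_of_le hle le_rfl))
      have h2 : ENNReal.ofReal v = ENNReal.ofReal (lam * v) / ENNReal.ofReal lam := by
        rw [ENNReal.ofReal_mul hlam.le, mul_comm, mul_div_assoc, ENNReal.div_self hlam0 hlamT, mul_one]
      rw [h2]
      exact ENNReal.div_le_div_right h1 _
    · simp only [ENNReal.iSup_div]
      refine iSup_le fun w => iSup_le fun hw => iSup_le fun hle => ?_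
      have hv : 0 < w / lam := div_pos hw hlam
      have hc : persp (fun x => ENNReal.ofReal lam * f x) y (w / lam) ≤ 1 := by
        rw [persp_const_smul f lam hlam y hv, mul_div_cancel₀ _ hlam.ne']
        exact hle
      have h2 : ENNReal.ofReal w / ENNReal.ofReal lam = ENNReal.ofReal (w / lam) := by
        rw [ENNReal.ofReal_div_of_pos hlam]
      rw [h2]
      exact le_iSup_of_le (w / lam) (le_iSup_of_le hv (le_iSup_of_le hc le_rfl))
  · -- linear composition
    funext y
    unfold radSup
    have : ∀ v : ℝ, persp (fun x' => f (A x')) y v = persp f (A y) v := by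
      intro v
      unfold persp
      dsimp only
      rw [map_smul]
    simp only [this]
  · -- min
    funext y
    unfold radSup
    simp only [persp_min]
    apply le_antisymm
    · refine iSup_le fun v => iSup_le fun hv => iSup_le fun hle => ?_
      rcases min_le_iff.mp hle with h | h
      · exact le_max_of_le_left
          (le_iSup_of_le v (le_iSup_of_le hv (le_iSup_of_le h le_rfl)))
      · exact le_max_of_le_right
          (le_iSup_of_le v (le_iSup_of_le hv (le_iSup_of_le h le_rfl)))
    · refine max_le ?_ ?_ <;>
      · refine iSup_le fun v => iSup_le fun hv => iSup_le fun h => ?_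
        refine le_iSup_of_le v (le_iSup_of_le hv (le_iSup_of_le ?_ le_rfl))
        first
          | exact min_le_of_left_le h
          | exact min_le_of_right_le h
  · -- max
    intro h₁ h₂
    funext y
    unfold radSup
    have hmax : ∀ v : ℝ, (persp (fun x => max (f₁ x) (f₂ x)) y v ≤ 1)
        = (persp f₁ y v ≤ 1 ∧ persp f₂ y v ≤ 1) := by
      intro v
      rw [persp_max, max_le_iff]
    simp only [hmax]
    exact iSup_and_eq_min _ _
      (fun v w hw hwv hv => le_trans ((h₁ y).1 (mem_Ioi.mpr hw)
        (mem_Ioi.mpr (hw.trans_le hwv)) hwv) hv)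
      (fun v w hw hwv hv => le_trans ((h₂ y).1 (mem_Ioi.mpr hw)
        (mem_Ioi.mpr (hw.trans_le hwv)) hwv) hv)
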